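/- arXiv:1802.06410 — 3 statements merged into one kernel-verified Lean document; each statement's English description precedes it below -/
import Mathlib

section
/- Let v : [0,∞) → ℝ be continuously differentiable with v(t) ≥ 0 for all t ≥ 0, and suppose v'(t) ≤ -α v(t) + β √(v(t)) for some α, β > 0. Then for all t ≥ 0, v(t) ≤ (√(v(0)) e^{-α t/2} + β/α)². -/
/-- If v is C¹, nonnegative, and v' ≤ -αv + β√v with α, β > 0, then
    v(t) ≤ (√(v(0)) e^{-αt/2} + β/α)² for all t ≥ 0. -/
theorem gronwall_sqrt_bound_decay (α β : ℝ) (hα : 0 < α) (hβ : 0 < β)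
    (v : ℝ → ℝ) (hv : ContDiff ℝ 1 v) (hvpos : ∀ t, 0 ≤ t → 0 ≤ v t)
    (hineq : ∀ t, 0 ≤ t → deriv v t ≤ -α * v t + β * Real.sqrt (v t)) :
    ∀ t, 0 ≤ t → v t ≤ (Real.sqrt (v 0) * Real.exp (-α * t / 2) + β / α) ^ 2 := by
  intro t ht
  set s : ℝ := Real.sqrt (v 0) with hs
  have hs0 : 0 ≤ s := Real.sqrt_nonneg _
  -- Key step: for every ε > 0, v t ≤ (s e^{-αt/2} + β/α + ε)^2
  have key : ∀ ε : ℝ, 0 < ε →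
      v t ≤ (s * Real.exp (-α * t / 2) + β / α + ε) ^ 2 := by
    intro ε hε
    set u : ℝ → ℝ := fun x => s * Real.exp (-α * x / 2) + β / α + ε with hu
    set u' : ℝ → ℝ := fun x => s * Real.exp (-α * x / 2) * (-α / 2) with hu'
    have hupos : ∀ x, 0 < u x := by
      intro x
      have : 0 < β / α := div_pos hβ hα
      have he : 0 < Real.exp (-α * x / 2) := Real.exp_pos _
      have : 0 ≤ s * Real.exp (-α * x / 2) := by positivity
      simp only [hu]; linarith
    have hB : ∀ x : ℝ, HasDerivAt (fun y => (u y) ^ 2) (2 * u x * u' x) x := by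
      intro x
      have h1 : HasDerivAt (fun y : ℝ => -α * y / 2) (-α / 2) x := by
        simpa using ((hasDerivAt_id x).const_mul (-α)).div_const 2
      have h2 : HasDerivAt (fun y : ℝ => Real.exp (-α * y / 2))
          (Real.exp (-α * x / 2) * (-α / 2)) x := (Real.hasDerivAt_exp _).comp x h1
      have h3 : HasDerivAt u (s * (Real.exp (-α * x / 2) * (-α / 2))) x := by
        simpa [hu, add_assoc] using ((h2.const_mul s).add_const (β / α + ε))
      have h4 := h3.fun_pow 2
      norm_num at h4
      refine h4.congr_deriv ?_
      simp only [hu']; ring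
    have hvderiv : ∀ x ∈ Set.Ico (0:ℝ) t,
        HasDerivWithinAt v (deriv v x) (Set.Ici x) x := by
      intro x _
      exact ((hv.differentiable one_ne_zero x).hasDerivAt).hasDerivWithinAt
    have hcont : ContinuousOn v (Set.Icc 0 t) := hv.continuous.continuousOn
    have ha : v 0 ≤ (u 0) ^ 2 := by
      have h0 : v 0 = s ^ 2 := (Real.sq_sqrt (hvpos 0 le_rfl)).symm
      have : 0 < β / α + ε := by positivity
      have hexp : Real.exp (-α * 0 / 2) = 1 := by norm_num
      have hpos : 0 < β / α + ε := by positivity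
      simp only [hu]
      rw [h0, hexp]
      nlinarith [hs0, hpos]
    have bound : ∀ x ∈ Set.Ico (0:ℝ) t, v x = (u x) ^ 2 →
        deriv v x < 2 * u x * u' x := by
      intro x hx heq
      have hx0 : 0 ≤ x := hx.1
      have husq : Real.sqrt (v x) = u x := by
        rw [heq, Real.sqrt_sq (hupos x).le]
      have h1 : deriv v x ≤ -α * (u x) ^ 2 + β * u x := by
        have := hineq x hx0
        rwa [husq, heq] at this
      have h2 : 2 * u x * u' x = -α * (u x) ^ 2 + β * u x + α * ε * u x := by
        simp only [hu, hu']
        field_simp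
        ring
      have h3 : 0 < α * ε * u x := by positivity
      linarith
    have := image_le_of_deriv_right_lt_deriv_boundary hcont hvderiv ha hB bound
      (Set.right_mem_Icc.2 ht)
    simpa [hu] using this
  -- Take the limit ε → 0⁺
  set c : ℝ := s * Real.exp (-α * t / 2) + β / α with hc
  have hlim : Filter.Tendsto (fun ε : ℝ => (c + ε) ^ 2) (nhdsWithin 0 (Set.Ioi 0))
      (nhds (c ^ 2)) := by
    have : Filter.Tendsto (fun ε : ℝ => (c + ε) ^ 2) (nhds 0) (nhds ((c + 0) ^ 2)) := by
      exact ((continuous_const.add continuous_id).pow 2).tendsto 0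
    simpa using this.mono_left nhdsWithin_le_nhds
  refine ge_of_tendsto hlim ?_
  filter_upwards [self_mem_nhdsWithin] with ε hε
  have := key ε hε
  linarith [this]
end

section
/- Let F(x,y) = (x(a - (x²+y²)) - ω y, y(a - (x²+y²)) + ω x) be the Stuart-Landau vector field on ℝ², and let q_{(x,y),ϖ I} be the density of a 2-dimensional Gaussian with mean (x,y) and covariance matrix ϖ² I (ϖ > 0). Then the Gaussian average ∫_{ℝ²} F(u) q_{(x,y), ϖ² I}(u) du equals the Stuart-Landau vector field with parameter a replaced by a - 4ϖ²: namely ( x(a - 4ϖ² - (x²+y²)) - ω y, y(a - 4ϖ² - (x²+y²)) + ω x ). -/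
open MeasureTheory Real

lemma gauss_odd {b : ℝ} {n : ℕ} (hn : Odd n) :
    (∫ t : ℝ, t ^ n * Real.exp (-b * t ^ 2)) = 0 := by
  have h := integral_neg_eq_self (fun t : ℝ => t ^ n * Real.exp (-b * t ^ 2)) volume
  have e : (fun t : ℝ => (-t) ^ n * Real.exp (-b * (-t) ^ 2))
      = fun t : ℝ => -(t ^ n * Real.exp (-b * t ^ 2)) := by
    funext t; rw [hn.neg_pow, neg_sq]; ring
  rw [e, integral_neg] at h
  linarith

lemma gauss_int_pow {b : ℝ} (hb : 0 < b) (n : ℕ) :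
    Integrable (fun t : ℝ => t ^ n * Real.exp (-b * t ^ 2)) := by
  have := integrable_rpow_mul_exp_neg_mul_sq hb (s := (n : ℝ))
    (lt_of_lt_of_le (by norm_num) (Nat.cast_nonneg n))
  simpa [Real.rpow_natCast] using this

lemma gauss_m2 {b : ℝ} (hb : 0 < b) :
    (∫ t : ℝ, t ^ 2 * Real.exp (-b * t ^ 2)) = Real.sqrt (π / b) / (2 * b) := by
  have hderiv : ∀ t : ℝ, HasDerivAt (fun t : ℝ => t * Real.exp (-b * t ^ 2))
      (Real.exp (-b * t ^ 2) - 2 * b * (t ^ 2 * Real.exp (-b * t ^ 2))) t := by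
    intro t
    have h1 : HasDerivAt (fun t : ℝ => -b * t ^ 2) (-b * (2 * t)) t := by
      simpa using ((hasDerivAt_pow 2 t).const_mul (-b))
    have h3 := (hasDerivAt_id t).mul h1.exp
    refine HasDerivAt.congr_deriv h3 ?_
    simp [id]
    ring
  have hint : Integrable
      (fun t : ℝ => Real.exp (-b * t ^ 2) - 2 * b * (t ^ 2 * Real.exp (-b * t ^ 2))) :=
    (integrable_exp_neg_mul_sq hb).sub ((gauss_int_pow hb 2).const_mul _)
  have hf : Integrable (fun t : ℝ => t * Real.exp (-b * t ^ 2)) := integrable_mul_exp_neg_mul_sq hb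
  have h0 := integral_eq_zero_of_hasDerivAt_of_integrable hderiv hint hf
  rw [integral_sub (integrable_exp_neg_mul_sq hb) ((gauss_int_pow hb 2).const_mul _),
    integral_const_mul, integral_gaussian] at h0
  have hb' : (2 * b) ≠ 0 := by positivity
  field_simp at h0 ⊢
  linarith

lemma gauss_combo_integrable {b : ℝ} (hb : 0 < b) (r : Fin 4 → Fin 4 → ℝ) :
    Integrable (fun u : ℝ × ℝ => ∑ i : Fin 4, ∑ j : Fin 4,
      r i j * ((u.1 ^ (i : ℕ) * Real.exp (-b * u.1 ^ 2)) *
               (u.2 ^ (j : ℕ) * Real.exp (-b * u.2 ^ 2)))) := by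
  rw [MeasureTheory.Measure.volume_eq_prod]
  refine integrable_finset_sum _ fun i _ => integrable_finset_sum _ fun j _ => ?_
  exact ((gauss_int_pow hb i).mul_prod (gauss_int_pow hb j)).const_mul _

lemma gauss_combo_integral {b : ℝ} (hb : 0 < b) (r : Fin 4 → Fin 4 → ℝ) :
    (∫ u : ℝ × ℝ, ∑ i : Fin 4, ∑ j : Fin 4,
      r i j * ((u.1 ^ (i : ℕ) * Real.exp (-b * u.1 ^ 2)) *
               (u.2 ^ (j : ℕ) * Real.exp (-b * u.2 ^ 2)))) =
    ∑ i : Fin 4, ∑ j : Fin 4, r i j *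
      ((∫ t : ℝ, t ^ (i : ℕ) * Real.exp (-b * t ^ 2)) *
       (∫ t : ℝ, t ^ (j : ℕ) * Real.exp (-b * t ^ 2))) := by
  rw [MeasureTheory.Measure.volume_eq_prod]
  rw [integral_finset_sum _ fun (i : Fin 4) _ => integrable_finset_sum _ fun (j : Fin 4) _ =>
    ((gauss_int_pow hb (i : ℕ)).mul_prod (gauss_int_pow hb (j : ℕ))).const_mul (r i j)]
  refine Finset.sum_congr rfl fun i _ => ?_
  rw [integral_finset_sum _ fun (j : Fin 4) _ =>
    ((gauss_int_pow hb (i : ℕ)).mul_prod (gauss_int_pow hb (j : ℕ))).const_mul (r i j)]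
  refine Finset.sum_congr rfl fun j _ => ?_
  rw [integral_const_mul,
    integral_prod_mul (fun t : ℝ => t ^ (i : ℕ) * Real.exp (-b * t ^ 2))
      (fun t : ℝ => t ^ (j : ℕ) * Real.exp (-b * t ^ 2))]

/-- The Gaussian average (mean (x,y), covariance ϖ²I) of the Stuart-Landau vector field
    F(u₁,u₂) = (u₁(a-(u₁²+u₂²)) - ωu₂, u₂(a-(u₁²+u₂²)) + ωu₁) is the Stuart-Landau field
    with parameter a replaced by a - 4ϖ². -/
theorem stuart_landau_gaussian_average (a ω x y ϖ : ℝ) (ha : 0 < a) (hϖ : 0 < ϖ) :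
    (∫ u : ℝ × ℝ,
        ((2 * π * ϖ ^ 2)⁻¹ *
            Real.exp (-(((u.1 - x) ^ 2 + (u.2 - y) ^ 2) / (2 * ϖ ^ 2)))) •
          ((u.1 * (a - (u.1 ^ 2 + u.2 ^ 2)) - ω * u.2,
            u.2 * (a - (u.1 ^ 2 + u.2 ^ 2)) + ω * u.1) : ℝ × ℝ)) =
      ((x * (a - 4 * ϖ ^ 2 - (x ^ 2 + y ^ 2)) - ω * y,
        y * (a - 4 * ϖ ^ 2 - (x ^ 2 + y ^ 2)) + ω * x) : ℝ × ℝ) := by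
  have hb : (0 : ℝ) < (2 * ϖ ^ 2)⁻¹ := by positivity
  set b : ℝ := (2 * ϖ ^ 2)⁻¹ with hbdef
  set c : ℝ := (2 * π * ϖ ^ 2)⁻¹ with hcdef
  set S : ℝ := Real.sqrt (π / b) with hSdef
  set A : ℝ := a - x ^ 2 - y ^ 2 with hAdef
  have hM0 : (∫ t : ℝ, t ^ (0 : ℕ) * Real.exp (-b * t ^ 2)) = S := by
    simp only [pow_zero, one_mul]; rw [integral_gaussian]
  have hM1 : (∫ t : ℝ, t ^ (1 : ℕ) * Real.exp (-b * t ^ 2)) = 0 := gauss_odd ⟨0, rfl⟩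
  have hM3 : (∫ t : ℝ, t ^ (3 : ℕ) * Real.exp (-b * t ^ 2)) = 0 := gauss_odd ⟨1, rfl⟩
  have h2b : 2 * b = (ϖ ^ 2)⁻¹ := by
    rw [hbdef]; field_simp
  have hM2 : (∫ t : ℝ, t ^ (2 : ℕ) * Real.exp (-b * t ^ 2)) = ϖ ^ 2 * S := by
    rw [gauss_m2 hb, h2b, div_eq_mul_inv, inv_inv, mul_comm, hSdef]
  set r1 : Fin 4 → Fin 4 → ℝ :=
    ![![c * (x * A - ω * y), c * (-2 * x * y - ω), -(c * x), 0],
      ![c * (A - 2 * x ^ 2), -(2 * c * y), -c, 0],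
      ![-(3 * c * x), 0, 0, 0],
      ![-c, 0, 0, 0]] with hr1
  set r2 : Fin 4 → Fin 4 → ℝ :=
    ![![c * (y * A + ω * x), c * (A - 2 * y ^ 2), -(3 * c * y), -c],
      ![c * (-2 * x * y + ω), -(2 * c * x), 0, 0],
      ![-(c * y), -c, 0, 0],
      ![0, 0, 0, 0]] with hr2
  rw [← integral_add_left_eq_self _ ((x, y) : ℝ × ℝ)]
  have hexp : ∀ s t : ℝ, Real.exp (-((s ^ 2 + t ^ 2) / (2 * ϖ ^ 2))) =
      Real.exp (-b * s ^ 2) * Real.exp (-b * t ^ 2) := by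
    intro s t
    rw [← Real.exp_add, hbdef]
    congr 1
    field_simp
    ring
  trans (∫ u : ℝ × ℝ,
      ((∑ i : Fin 4, ∑ j : Fin 4, r1 i j *
          ((u.1 ^ (i : ℕ) * Real.exp (-b * u.1 ^ 2)) * (u.2 ^ (j : ℕ) * Real.exp (-b * u.2 ^ 2))),
        ∑ i : Fin 4, ∑ j : Fin 4, r2 i j *
          ((u.1 ^ (i : ℕ) * Real.exp (-b * u.1 ^ 2)) * (u.2 ^ (j : ℕ) * Real.exp (-b * u.2 ^ 2)))) : ℝ × ℝ))
  · refine integral_congr_ae (Filter.Eventually.of_forall fun u => ?_)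
    simp only [Prod.fst_add, Prod.snd_add, add_sub_cancel_left, Prod.smul_mk, smul_eq_mul]
    rw [hexp u.1 u.2]
    refine Prod.ext ?_ ?_ <;>
    · simp only [hr1, hr2, Fin.sum_univ_four, Fin.val_zero, Fin.val_one, Fin.val_two,
        Matrix.cons_val_zero, Matrix.cons_val_one, Matrix.head_cons, Matrix.cons_val_two,
        Matrix.cons_val_three, Matrix.tail_cons, pow_zero, pow_one, hAdef,
        show ((3 : Fin 4) : ℕ) = 3 from rfl, show ((2 : Fin 4) : ℕ) = 2 from rfl,
        show ((1 : Fin 4) : ℕ) = 1 from rfl, show ((0 : Fin 4) : ℕ) = 0 from rfl]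
      show _ = _
      ring
  · rw [integral_pair (gauss_combo_integrable hb r1) (gauss_combo_integrable hb r2),
      gauss_combo_integral hb r1, gauss_combo_integral hb r2]
    have hSS : S * S = 2 * π * ϖ ^ 2 := by
      rw [hSdef, Real.mul_self_sqrt (by positivity), hbdef]
      field_simp
    have hc : c * (S * S) = 1 := by
      rw [hSS, hcdef]
      field_simp
    simp only [Fin.sum_univ_four, hr1, hr2,
      Matrix.cons_val_zero, Matrix.cons_val_one, Matrix.head_cons, Matrix.cons_val_two,
      Matrix.cons_val_three, Matrix.tail_cons,
      show ((3 : Fin 4) : ℕ) = 3 from rfl, show ((2 : Fin 4) : ℕ) = 2 from rfl,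
      show ((1 : Fin 4) : ℕ) = 1 from rfl, show ((0 : Fin 4) : ℕ) = 0 from rfl,
      hM0, hM1, hM2, hM3, mul_zero, zero_mul, add_zero, zero_add]
    rw [Prod.mk.injEq]
    constructor
    · linear_combination (x * A - ω * y - 4 * ϖ ^ 2 * x) * hc + x * hAdef
    · linear_combination (y * A + ω * x - 4 * ϖ ^ 2 * y) * hc + y * hAdef
end

section
/- Let θ ∈ (0,1), let K and σ be diagonal d×d matrices with positive diagonal entries, and let w_θ(x) = exp((θ/2) x·Kσ^{-2}x). For any u ∈ H¹(w_θ) (i.e., u and ∇u square-integrable against weight w_θ), the function x ↦ σ^{-1}Kx·u(x) belongs to L²(w_θ) and ‖σ^{-1}Kx u‖_{L²(w_θ)} ≤ (2/θ) ‖σ∇u‖_{L²(w_θ)}. -/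
open MeasureTheory Real Filter Topology
set_option maxHeartbeats 2000000

noncomputable def gcut (t : ℝ) : ℝ := Real.smoothTransition ((4 - t)/3)

lemma gcut_contDiff : ContDiff ℝ 1 gcut :=
  Real.smoothTransition.contDiff.comp ((contDiff_const.sub contDiff_id).div_const 3)

lemma gcut_nonneg (t : ℝ) : 0 ≤ gcut t := Real.smoothTransition.nonneg _
lemma gcut_le_one (t : ℝ) : gcut t ≤ 1 := Real.smoothTransition.le_one _
lemma gcut_one {t : ℝ} (ht : t ≤ 1) : gcut t = 1 :=
  Real.smoothTransition.one_of_one_le (by linarith)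
lemma gcut_zero {t : ℝ} (ht : 4 ≤ t) : gcut t = 0 :=
  Real.smoothTransition.zero_of_nonpos (by linarith)

lemma gcut_deriv_cont : Continuous (deriv gcut) :=
  gcut_contDiff.continuous_deriv le_rfl

lemma gcut_deriv_zero {t : ℝ} (ht : 4 < t) : deriv gcut t = 0 := by
  have h : gcut =ᶠ[nhds t] fun _ => (0:ℝ) := by
    filter_upwards [Ioi_mem_nhds ht] with s hs
    exact gcut_zero (le_of_lt hs)
  rw [h.deriv_eq]
  exact deriv_const _ _

lemma hasFDerivAt_proj (d : ℕ) (j : Fin d) (x : EuclideanSpace ℝ (Fin d)) :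
    HasFDerivAt (fun y : EuclideanSpace ℝ (Fin d) => y j)
      (EuclideanSpace.proj j : EuclideanSpace ℝ (Fin d) →L[ℝ] ℝ) x :=
  ((EuclideanSpace.proj (𝕜 := ℝ) j).hasFDerivAt (x := x)).congr_of_eventuallyEq
    (Filter.Eventually.of_forall fun _ => rfl)

lemma hasFDerivAt_wsumsq (d : ℕ) (a : Fin d → ℝ) (x : EuclideanSpace ℝ (Fin d)) :
    HasFDerivAt (fun y : EuclideanSpace ℝ (Fin d) => ∑ j, a j * (y j)^2)
      (∑ j, (2 * a j * x j) • (EuclideanSpace.proj j : EuclideanSpace ℝ (Fin d) →L[ℝ] ℝ)) x := by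
  apply HasFDerivAt.fun_sum
  intro j _
  have hp := hasFDerivAt_proj d j x
  have h2 := (hp.fun_mul hp).const_mul (a j)
  have e1 : (fun y : EuclideanSpace ℝ (Fin d) => a j * (y j)^2) = fun y => a j * (y j * y j) := by
    funext y; ring
  have e2 : (2 * a j * x j) • (EuclideanSpace.proj j : EuclideanSpace ℝ (Fin d) →L[ℝ] ℝ)
      = a j • (x j • EuclideanSpace.proj j + x j • EuclideanSpace.proj j) := by
    rw [← add_smul, smul_smul]; congr 1; ring
  rw [e1, e2]; exact h2

lemma wsumsq_apply (d : ℕ) (a : Fin d → ℝ) (x : EuclideanSpace ℝ (Fin d)) (i : Fin d) :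
    (∑ j, (2 * a j * x j) • (EuclideanSpace.proj j : EuclideanSpace ℝ (Fin d) →L[ℝ] ℝ))
      (EuclideanSpace.single i (1:ℝ)) = 2 * a i * x i := by
  rw [ContinuousLinearMap.sum_apply]
  simp only [ContinuousLinearMap.smul_apply, PiLp.proj_apply,
    EuclideanSpace.single_apply, smul_eq_mul]
  simp [Finset.sum_ite_eq' Finset.univ i]

theorem coord (d : ℕ) (θ : ℝ) (hθ0 : 0 < θ) (c : Fin d → ℝ) (hc : ∀ j, 0 < c j)
    (w u : EuclideanSpace ℝ (Fin d) → ℝ)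
    (hw : w = fun x => Real.exp (θ / 2 * ∑ j, c j * (x j) ^ 2))
    (hu : ContDiff ℝ 1 u)
    (hu2 : Integrable (fun x => u x ^ 2 * w x))
    (i : Fin d)
    (hBi : Integrable (fun x => (fderiv ℝ u x (EuclideanSpace.single i (1:ℝ))) ^ 2 * w x)) :
    Integrable (fun x : EuclideanSpace ℝ (Fin d) => (x i)^2 * u x ^2 * w x) ∧
    ∫ x : EuclideanSpace ℝ (Fin d), (x i)^2 * u x^2 * w x ≤
      (2/(θ * c i))^2 * ∫ x : EuclideanSpace ℝ (Fin d),
        (fderiv ℝ u x (EuclideanSpace.single i (1:ℝ)))^2 * w x := by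
  have hθc : 0 < θ * c i := mul_pos hθ0 (hc i)
  set e : EuclideanSpace ℝ (Fin d) := EuclideanSpace.single i (1:ℝ) with he
  have hwpos : ∀ x, 0 < w x := fun x => by rw [hw]; exact Real.exp_pos _
  have hwcd : ContDiff ℝ 1 w := by
    rw [hw]
    exact (contDiff_const.mul (ContDiff.sum fun j _ =>
      contDiff_const.mul ((EuclideanSpace.proj (𝕜 := ℝ) j).contDiff.pow 2))).exp
  have hwcont : Continuous w := hwcd.continuous
  have hwhas : ∀ x, HasFDerivAt w
      ((w x) • ((θ/2) • (∑ j, (2 * c j * x j) •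
        (EuclideanSpace.proj j : EuclideanSpace ℝ (Fin d) →L[ℝ] ℝ)))) x := by
    intro x
    have h := ((hasFDerivAt_wsumsq d c x).const_mul (θ/2)).exp
    rw [hw]
    convert h using 1
  have hwdiff : Differentiable ℝ w := fun x => (hwhas x).differentiableAt
  have hwfd : ∀ x, fderiv ℝ w x e = θ * c i * x i * w x := by
    intro x
    rw [(hwhas x).fderiv, ContinuousLinearMap.smul_apply, ContinuousLinearMap.smul_apply,
      he, wsumsq_apply]
    simp only [smul_eq_mul]; ring
  have hudiff : Differentiable ℝ u := hu.differentiable one_ne_zero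
  have hucont : Continuous u := hu.continuous
  set du : EuclideanSpace ℝ (Fin d) → ℝ := fun x => fderiv ℝ u x e with hdu_def
  have hducont : Continuous du := (hu.continuous_fderiv one_ne_zero).clm_apply continuous_const
  -- squared norm
  set s : EuclideanSpace ℝ (Fin d) → ℝ := fun x => ∑ j, (1:ℝ) * (x j)^2 with hs_def
  have hs_nonneg : ∀ x, 0 ≤ s x := fun x => Finset.sum_nonneg fun j _ => by positivity
  have hs_cd : ContDiff ℝ 1 s := ContDiff.sum fun j _ =>
    contDiff_const.mul ((EuclideanSpace.proj (𝕜 := ℝ) j).contDiff.pow 2)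
  have hs_cont : Continuous s := hs_cd.continuous
  have hs_norm : ∀ x, s x = ‖x‖^2 := by
    intro x
    rw [EuclideanSpace.norm_eq, Real.sq_sqrt (by positivity)]
    simp [hs_def, sq_abs]
  have hxi_le_s : ∀ x, (x i)^2 ≤ s x := by
    intro x
    calc (x i)^2 = 1*(x i)^2 := (one_mul _).symm
    _ ≤ ∑ j, (1:ℝ)*(x j)^2 := Finset.single_le_sum (f := fun j => (1:ℝ)*(x j)^2)
        (fun j _ => by positivity) (Finset.mem_univ i)
  -- bound for deriv gcut
  obtain ⟨M, hM⟩ := (isCompact_Icc : IsCompact (Set.Icc (0:ℝ) 4)).exists_bound_of_continuousOn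
    gcut_deriv_cont.continuousOn
  have hM0 : 0 ≤ M := le_trans (norm_nonneg _) (hM 0 (by norm_num))
  -- cutoffs
  set r : ℕ → ℝ := fun n => (((n:ℝ)+1)^2)⁻¹ with hr_def
  have hr_pos : ∀ n, 0 < r n := fun n => by simp only [hr_def]; positivity
  set χ : ℕ → EuclideanSpace ℝ (Fin d) → ℝ := fun n x => gcut (r n * s x) with hχ_def
  have hχ_nonneg : ∀ n x, 0 ≤ χ n x := fun n x => gcut_nonneg _
  have hχ_le_one : ∀ n x, χ n x ≤ 1 := fun n x => gcut_le_one _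
  have hχ_cd : ∀ n, ContDiff ℝ 1 (χ n) := fun n => gcut_contDiff.comp (contDiff_const.mul hs_cd)
  have hχ_cont : ∀ n, Continuous (χ n) := fun n => (hχ_cd n).continuous
  have hχ_has : ∀ n x, HasFDerivAt (χ n)
      ((deriv gcut (r n * s x)) • ((r n) • (∑ j, (2*(1:ℝ)*x j) •
        (EuclideanSpace.proj j : EuclideanSpace ℝ (Fin d) →L[ℝ] ℝ)))) x := by
    intro n x
    have hh : HasFDerivAt (fun y => r n * s y) ((r n) • (∑ j, (2*(1:ℝ)*x j) •
        (EuclideanSpace.proj j : EuclideanSpace ℝ (Fin d) →L[ℝ] ℝ))) x :=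
      (hasFDerivAt_wsumsq d (fun _ => (1:ℝ)) x).const_mul (r n)
    have hg : HasDerivAt gcut (deriv gcut (r n * s x)) (r n * s x) :=
      ((gcut_contDiff.differentiable one_ne_zero) _).hasDerivAt
    have := hg.comp_hasFDerivAt x hh; exact this
  have hχ_fd_e : ∀ n x, fderiv ℝ (χ n) x e = deriv gcut (r n * s x) * (r n * (2 * x i)) := by
    intro n x
    rw [(hχ_has n x).fderiv, ContinuousLinearMap.smul_apply, ContinuousLinearMap.smul_apply,
      he, wsumsq_apply]
    simp only [smul_eq_mul]; ring
  have hχ_supp : ∀ n, HasCompactSupport (χ n) := by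
    intro n
    apply HasCompactSupport.intro (isCompact_closedBall (0 : EuclideanSpace ℝ (Fin d)) (2*((n:ℝ)+1)))
    intro x hx
    have hxnorm : 2*((n:ℝ)+1) < ‖x‖ := by
      by_contra h
      exact hx (Metric.mem_closedBall.2 (by rw [dist_zero_right]; exact not_lt.1 h))
    have hn1 : (0:ℝ) < ((n:ℝ)+1)^2 := by positivity
    have h4 : (4:ℝ) ≤ r n * s x := by
      rw [hs_norm, hr_def]
      rw [inv_mul_eq_div, le_div_iff₀ hn1]
      nlinarith [norm_nonneg x]
    exact gcut_zero h4
  have hχ_dbd : ∀ n x, |deriv gcut (r n * s x) * (r n * (2 * x i)) * x i| ≤ 8*M := by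
    intro n x
    have ht0 : 0 ≤ r n * s x := mul_nonneg (hr_pos n).le (hs_nonneg x)
    rcases le_or_gt (r n * s x) 4 with h4 | h4
    · have hd : |deriv gcut (r n * s x)| ≤ M := by
        have := hM (r n * s x) ⟨ht0, h4⟩; rwa [Real.norm_eq_abs] at this
      have hxx : r n * (x i)^2 ≤ r n * s x :=
        mul_le_mul_of_nonneg_left (hxi_le_s x) (hr_pos n).le
      have heq : deriv gcut (r n * s x) * (r n * (2 * x i)) * x i
          = deriv gcut (r n * s x) * (2 * (r n * (x i)^2)) := by ring
      rw [heq, abs_mul, abs_of_nonneg (by positivity : (0:ℝ) ≤ 2 * (r n * (x i)^2))]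
      have h1 : |deriv gcut (r n * s x)| * (2*(r n*(x i)^2)) ≤ M * (2*(r n * s x)) :=
        mul_le_mul hd (by nlinarith) (by positivity) hM0
      nlinarith
    · rw [gcut_deriv_zero h4]
      simp [hM0]
  have hχ_eq_one : ∀ (n : ℕ) (x : EuclideanSpace ℝ (Fin d)), s x < ((n:ℝ)+1)^2 → χ n =ᶠ[nhds x] (fun _ => (1:ℝ)) := by
    intro n x hx
    have hU : IsOpen {y : EuclideanSpace ℝ (Fin d) | s y < ((n:ℝ)+1)^2} :=
      isOpen_lt hs_cont continuous_const
    filter_upwards [hU.mem_nhds hx] with y hy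
    simp only [hχ_def]
    apply gcut_one
    have h1 : r n * s y < r n * ((n:ℝ)+1)^2 := mul_lt_mul_of_pos_left hy (hr_pos n)
    have h2 : r n * ((n:ℝ)+1)^2 = 1 := by
      simp only [hr_def]; field_simp
    rw [h2] at h1
    exact h1.le
  have hχ_tendsto_one : ∀ x, ∀ᶠ n in atTop, χ n x = 1 := by
    intro x
    obtain ⟨N, hN⟩ := exists_nat_gt (s x)
    filter_upwards [eventually_ge_atTop N] with n hn
    have h1 : (N:ℝ) ≤ (n:ℝ) := Nat.cast_le.2 hn
    have hsx : s x < ((n:ℝ)+1)^2 := by nlinarith [hs_nonneg x]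
    exact (hχ_eq_one n x hsx).eq_of_nhds
  have hχ_fd_zero : ∀ x, ∀ᶠ n in atTop, fderiv ℝ (χ n) x = 0 := by
    intro x
    obtain ⟨N, hN⟩ := exists_nat_gt (s x)
    filter_upwards [eventually_ge_atTop N] with n hn
    have h1 : (N:ℝ) ≤ (n:ℝ) := Nat.cast_le.2 hn
    have hsx : s x < ((n:ℝ)+1)^2 := by nlinarith [hs_nonneg x]
    rw [(hχ_eq_one n x hsx).fderiv_eq]
    exact fderiv_const_apply 1
  -- the main quantities
  set ρ : EuclideanSpace ℝ (Fin d) → ℝ := fun x => (x i)^2 * u x^2 * w x with hρ_def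
  have hρ_nonneg : ∀ x, 0 ≤ ρ x := fun x =>
    mul_nonneg (mul_nonneg (sq_nonneg _) (sq_nonneg _)) (hwpos x).le
  have hρ_cont : Continuous ρ :=
    (((EuclideanSpace.proj (𝕜 := ℝ) i).continuous.pow 2).mul (hucont.pow 2)).mul hwcont
  set ε : ℝ := θ * c i / 2 with hε_def
  have hε : 0 < ε := by simp only [hε_def]; positivity
  set B : ℝ := ∫ x, du x^2 * w x with hB_def
  have hBnn : 0 ≤ B := integral_nonneg fun x => mul_nonneg (sq_nonneg _) (hwpos x).le
  set U : ℝ := ∫ x, u x^2 * w x with hU_def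
  have hUnn : 0 ≤ U := integral_nonneg fun x => mul_nonneg (sq_nonneg _) (hwpos x).le
  -- integrabilities (uniform in n)
  have hIint : ∀ n, Integrable (fun x => χ n x * ρ x) :=
    fun n => ((hχ_cont n).mul hρ_cont).integrable_of_hasCompactSupport (hχ_supp n).mul_right
  have hdχ_cont : ∀ n, Continuous (fun x => fderiv ℝ (χ n) x e) :=
    fun n => ((hχ_cd n).continuous_fderiv one_ne_zero).clm_apply continuous_const
  have hdχ_supp : ∀ n, HasCompactSupport (fun x => fderiv ℝ (χ n) x e) := by
    intro n
    exact (hχ_supp n).fderiv_apply (𝕜 := ℝ) e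
  have hG1_int : ∀ n, Integrable (fun x => fderiv ℝ (χ n) x e * (x i * u x^2) * w x) := by
    intro n
    exact (((hdχ_cont n).mul ((EuclideanSpace.proj (𝕜 := ℝ) i).continuous.mul
      (hucont.pow 2))).mul hwcont).integrable_of_hasCompactSupport
      (((hdχ_supp n).mul_right).mul_right)
  -- pointwise bound on the cutoff-derivative term
  have hG1_bd : ∀ n x, -(fderiv ℝ (χ n) x e * (x i * u x^2) * w x) ≤ 8*M*(u x^2*w x) ∧
      |fderiv ℝ (χ n) x e * (x i * u x^2) * w x| ≤ 8*M*(u x^2*w x) := by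
    intro n x
    have h1 : |fderiv ℝ (χ n) x e * x i| ≤ 8*M := by
      rw [hχ_fd_e]; exact hχ_dbd n x
    have h2 : |fderiv ℝ (χ n) x e * (x i * u x^2) * w x|
        = |fderiv ℝ (χ n) x e * x i| * (u x^2 * w x) := by
      rw [show fderiv ℝ (χ n) x e * (x i * u x^2) * w x
          = (fderiv ℝ (χ n) x e * x i) * (u x^2 * w x) from by ring, abs_mul,
        abs_of_nonneg (mul_nonneg (sq_nonneg _) (hwpos x).le)]
    have h3 : |fderiv ℝ (χ n) x e * (x i * u x^2) * w x| ≤ 8*M*(u x^2*w x) := by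
      rw [h2]
      exact mul_le_mul_of_nonneg_right h1 (mul_nonneg (sq_nonneg _) (hwpos x).le)
    exact ⟨le_trans (neg_le_abs _) h3, h3⟩
  -- key inequality for each n
  have key : ∀ n, θ * c i * (∫ x, χ n x * ρ x) ≤
      (∫ x, -(fderiv ℝ (χ n) x e * (x i * u x^2) * w x)) + ε * (∫ x, χ n x * ρ x) + (1/ε) * B := by
    intro n
    set f : EuclideanSpace ℝ (Fin d) → ℝ := fun x => χ n x * (x i * u x ^2) with hf_def
    have hf_cd : ContDiff ℝ 1 f := (hχ_cd n).mul
      (((EuclideanSpace.proj (𝕜 := ℝ) i).contDiff).mul (hu.pow 2))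
    have hf_supp : HasCompactSupport f := (hχ_supp n).mul_right
    have hf_diff : Differentiable ℝ f := hf_cd.differentiable one_ne_zero
    have hdf_cont : Continuous (fun x => fderiv ℝ f x e) :=
      (hf_cd.continuous_fderiv one_ne_zero).clm_apply continuous_const
    have hdf_supp : HasCompactSupport (fun x => fderiv ℝ f x e) :=
      hf_supp.fderiv_apply (𝕜 := ℝ) e
    have hint_fg : Integrable (fun x => f x * w x) :=
      (hf_cd.continuous.mul hwcont).integrable_of_hasCompactSupport hf_supp.mul_right
    have hint_fg' : Integrable (fun x => f x * fderiv ℝ w x e) := by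
      have hh : (fun x => f x * fderiv ℝ w x e) = fun x => f x * (θ*c i*x i*w x) :=
        funext fun x => by rw [hwfd]
      rw [hh]
      exact (hf_cd.continuous.mul ((continuous_const.mul
        (EuclideanSpace.proj (𝕜 := ℝ) i).continuous).mul hwcont)).integrable_of_hasCompactSupport
        hf_supp.mul_right
    have hint_f'g : Integrable (fun x => fderiv ℝ f x e * w x) :=
      (hdf_cont.mul hwcont).integrable_of_hasCompactSupport hdf_supp.mul_right
    have key0 := integral_mul_fderiv_eq_neg_fderiv_mul_of_integrable hint_f'g hint_fg' hint_fg
      (fun x _ => hf_diff x) (fun x _ => hwdiff x)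
    -- LHS
    have hL : (fun x => f x * fderiv ℝ w x e) = fun x => (θ * c i) * (χ n x * ρ x) := by
      funext x
      rw [hwfd]
      simp only [hf_def, hρ_def]
      ring
    rw [hL, integral_const_mul] at key0
    -- derivative of f
    have hffd : ∀ x, fderiv ℝ f x e = fderiv ℝ (χ n) x e * (x i * u x^2)
        + χ n x * (u x^2 + x i * (2 * u x * du x)) := by
      intro x
      have hsq : HasFDerivAt (fun y => u y ^ 2) ((2 * u x) • fderiv ℝ u x) x := by
        have h := ((hudiff x).hasFDerivAt).fun_mul ((hudiff x).hasFDerivAt)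
        have e1 : (fun y => u y ^ 2) = fun y => u y * u y := by
          funext y; ring
        have e2 : (2 * u x) • fderiv ℝ u x = u x • fderiv ℝ u x + u x • fderiv ℝ u x := by
          rw [← add_smul]; congr 1; ring
        rw [e1, e2]; exact h
      have hxi := hasFDerivAt_proj d i x
      have hprod := hxi.fun_mul hsq
      have hχx : HasFDerivAt (χ n) (fderiv ℝ (χ n) x) x :=
        ((hχ_cd n).differentiable one_ne_zero x).hasFDerivAt
      have hf_has := hχx.fun_mul hprod
      rw [hf_has.fderiv]
      simp only [ContinuousLinearMap.add_apply, ContinuousLinearMap.smul_apply, smul_eq_mul,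
        PiLp.proj_apply, he, EuclideanSpace.single_apply, if_true, eq_self_iff_true, hdu_def]
      ring
    -- split RHS
    have hG2_int : Integrable (fun x => χ n x * (u x^2 * w x)) :=
      ((hχ_cont n).mul ((hucont.pow 2).mul hwcont)).integrable_of_hasCompactSupport
        (hχ_supp n).mul_right
    have hG3_int : Integrable (fun x => χ n x * (x i * (2 * u x * du x)) * w x) :=
      (((hχ_cont n).mul ((EuclideanSpace.proj (𝕜 := ℝ) i).continuous.mul
        ((continuous_const.mul hucont).mul hducont))).mul hwcont).integrable_of_hasCompactSupport
        (((hχ_supp n).mul_right).mul_right)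
    have hRHS : ∫ x, fderiv ℝ f x e * w x
        = (∫ x, fderiv ℝ (χ n) x e * (x i * u x^2) * w x)
          + (∫ x, χ n x * (u x^2 * w x)) + (∫ x, χ n x * (x i * (2 * u x * du x)) * w x) := by
      rw [show (fun x => fderiv ℝ f x e * w x) = fun x =>
          (fderiv ℝ (χ n) x e * (x i * u x^2) * w x) + (χ n x * (u x^2 * w x))
            + (χ n x * (x i * (2 * u x * du x)) * w x) from funext fun x => by
        rw [hffd x]; ring]
      have h12 : Integrable (fun x => fderiv ℝ (χ n) x e * (x i * u x^2) * w x
          + χ n x * (u x^2 * w x)) volume := (hG1_int n).add hG2_int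
      rw [integral_add h12 hG3_int, integral_add (hG1_int n) hG2_int]
    rw [hRHS] at key0
    -- bounds
    have h2 : 0 ≤ ∫ x, χ n x * (u x^2 * w x) :=
      integral_nonneg fun x => mul_nonneg (hχ_nonneg n x) (mul_nonneg (sq_nonneg _) (hwpos x).le)
    have h3 : - ∫ x, χ n x * (x i * (2 * u x * du x)) * w x
        ≤ ε * (∫ x, χ n x * ρ x) + (1/ε) * B := by
      rw [← integral_neg]
      have hmono : ∀ x, -(χ n x * (x i * (2 * u x * du x)) * w x)
          ≤ ε * (χ n x * ρ x) + (1/ε) * (du x^2 * w x) := by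
        intro x
        have hab : -(2*(x i * u x)*(du x)) ≤ ε*(x i * u x)^2 + (1/ε)*(du x)^2 := by
          have hid : ε*(x i*u x)^2 + (1/ε)*(du x)^2 + 2*(x i*u x)*(du x)
              = (1/ε)*(ε*(x i*u x)+du x)^2 := by
            field_simp
            ring
          have hnn : 0 ≤ (1/ε)*(ε*(x i*u x)+du x)^2 := by positivity
          linarith
        have hχw : (0:ℝ) ≤ χ n x * w x := mul_nonneg (hχ_nonneg n x) (hwpos x).le
        have step := mul_le_mul_of_nonneg_left hab hχw
        have e1 : -(χ n x * (x i * (2 * u x * du x)) * w x)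
            = χ n x * w x * (-(2*(x i * u x)*(du x))) := by ring
        have e2 : χ n x * w x * (ε*(x i * u x)^2 + (1/ε)*(du x)^2)
            = ε * (χ n x * ρ x) + χ n x * w x * ((1/ε)*(du x)^2) := by
          simp only [hρ_def]; ring
        have hb2 : χ n x * w x * ((1/ε)*(du x)^2) ≤ (1/ε) * (du x^2 * w x) := by
          have h1 : χ n x * w x * ((1/ε)*(du x)^2) = ((1/ε) * (du x^2 * w x)) * χ n x := by ring
          rw [h1]
          exact mul_le_of_le_one_right (mul_nonneg (by positivity) (mul_nonneg (sq_nonneg _) (hwpos x).le)) (hχ_le_one n x)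
        rw [e1]
        calc χ n x * w x * (-(2*(x i * u x)*(du x)))
            ≤ χ n x * w x * (ε*(x i * u x)^2 + (1/ε)*(du x)^2) := step
          _ = ε * (χ n x * ρ x) + χ n x * w x * ((1/ε)*(du x)^2) := e2
          _ ≤ ε * (χ n x * ρ x) + (1/ε) * (du x^2 * w x) := by linarith [hb2]
      calc ∫ x, -(χ n x * (x i * (2 * u x * du x)) * w x)
          ≤ ∫ x, (ε * (χ n x * ρ x) + (1/ε) * (du x^2 * w x)) :=
            integral_mono hG3_int.neg (((hIint n).const_mul ε).add (hBi.const_mul (1/ε)))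
              hmono
        _ = ε * (∫ x, χ n x * ρ x) + (1/ε) * B := by
            rw [integral_add ((hIint n).const_mul ε) (hBi.const_mul (1/ε)),
              integral_const_mul, integral_const_mul, hB_def, hdu_def]
      -- note hBi is in terms of e after `set`
    have hneg1 : ∫ x, -(fderiv ℝ (χ n) x e * (x i * u x^2) * w x)
        = - ∫ x, fderiv ℝ (χ n) x e * (x i * u x^2) * w x := integral_neg _
    linarith [key0, h2, h3, hneg1]
  -- bound on the boundary term
  have hT_bd : ∀ n, (∫ x, -(fderiv ℝ (χ n) x e * (x i * u x^2) * w x)) ≤ 8*M*U := by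
    intro n
    calc ∫ x, -(fderiv ℝ (χ n) x e * (x i * u x^2) * w x)
        ≤ ∫ x, 8*M*(u x^2 * w x) :=
          integral_mono (hG1_int n).neg (hu2.const_mul (8*M)) fun x => (hG1_bd n x).1
      _ = 8*M*U := by rw [integral_const_mul, hU_def]
  have hIn_nonneg : ∀ n, 0 ≤ ∫ x, χ n x * ρ x :=
    fun n => integral_nonneg fun x => mul_nonneg (hχ_nonneg n x) (hρ_nonneg x)
  have hIn_bd : ∀ n, ∫ x, χ n x * ρ x ≤ (8*M*U + (1/ε)*B)/ε := by
    intro n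
    have hk := key n
    have hT := hT_bd n
    have hsum : ε * (∫ x, χ n x * ρ x) ≤ 8*M*U + (1/ε)*B := by
      have hθc2 : θ * c i = ε + ε := by simp only [hε_def]; ring
      have hexp : θ * c i * (∫ x, χ n x * ρ x)
          = ε * (∫ x, χ n x * ρ x) + ε * (∫ x, χ n x * ρ x) := by rw [hθc2]; ring
      linarith [hk, hT, hexp]
    rw [le_div_iff₀ hε]
    linarith [hsum]
  set M₁ : ℝ := (8*M*U + (1/ε)*B)/ε with hM₁_def
  -- integrability of ρ via Fatou
  have hρ_int : Integrable ρ := by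
    refine ⟨hρ_cont.aestronglyMeasurable, ?_⟩
    rw [hasFiniteIntegral_iff_ofReal (Filter.Eventually.of_forall hρ_nonneg)]
    have hle : ∫⁻ x, ENNReal.ofReal (ρ x) ≤ ENNReal.ofReal M₁ := by
      have h1 : ∀ x, ENNReal.ofReal (ρ x)
          = liminf (fun n => ENNReal.ofReal (χ n x * ρ x)) atTop := by
        intro x
        refine (Filter.Tendsto.liminf_eq ?_).symm
        apply tendsto_const_nhds.congr'
        filter_upwards [hχ_tendsto_one x] with n hn
        rw [hn, one_mul]
      calc ∫⁻ x, ENNReal.ofReal (ρ x)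
          = ∫⁻ x, liminf (fun n => ENNReal.ofReal (χ n x * ρ x)) atTop :=
            lintegral_congr fun x => h1 x
        _ ≤ liminf (fun n => ∫⁻ x, ENNReal.ofReal (χ n x * ρ x)) atTop :=
            lintegral_liminf_le fun n =>
              ((hχ_cont n).mul hρ_cont).measurable.ennreal_ofReal
        _ ≤ ENNReal.ofReal M₁ := by
            have hterm : ∀ n, (∫⁻ x, ENNReal.ofReal (χ n x * ρ x)) ≤ ENNReal.ofReal M₁ := by
              intro n
              rw [← ofReal_integral_eq_lintegral_ofReal (hIint n)
                (Filter.Eventually.of_forall fun x => mul_nonneg (hχ_nonneg n x) (hρ_nonneg x))]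
              exact ENNReal.ofReal_le_ofReal (hIn_bd n)
            calc liminf (fun n => ∫⁻ x, ENNReal.ofReal (χ n x * ρ x)) atTop
                ≤ liminf (fun _ => ENNReal.ofReal M₁) atTop :=
                  Filter.liminf_le_liminf (Filter.Eventually.of_forall hterm)
              _ = ENNReal.ofReal M₁ := Filter.liminf_const _
    exact lt_of_le_of_lt hle ENNReal.ofReal_lt_top
  -- limits
  have hIn_tendsto : Tendsto (fun n => ∫ x, χ n x * ρ x) atTop (𝓝 (∫ x, ρ x)) := by
    apply tendsto_integral_of_dominated_convergence (F := fun n x => χ n x * ρ x) ρ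
      (fun n => ((hχ_cont n).mul hρ_cont).aestronglyMeasurable) hρ_int
    · intro n
      apply Filter.Eventually.of_forall
      intro x
      rw [Real.norm_eq_abs, abs_of_nonneg (mul_nonneg (hχ_nonneg n x) (hρ_nonneg x))]
      exact mul_le_of_le_one_left (hρ_nonneg x) (hχ_le_one n x)
    · apply Filter.Eventually.of_forall
      intro x
      apply tendsto_const_nhds.congr'
      filter_upwards [hχ_tendsto_one x] with n hn
      rw [hn, one_mul]
  have hT_tendsto : Tendsto (fun n => ∫ x, -(fderiv ℝ (χ n) x e * (x i * u x^2) * w x))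
      atTop (𝓝 0) := by
    have h0 : (0:ℝ) = ∫ _x : EuclideanSpace ℝ (Fin d), (0:ℝ) := by simp
    rw [h0]
    apply tendsto_integral_of_dominated_convergence
      (F := fun n x => -(fderiv ℝ (χ n) x e * (x i * u x^2) * w x)) (fun x => 8*M*(u x^2 * w x))
      (fun n => (((((hdχ_cont n).mul ((EuclideanSpace.proj (𝕜 := ℝ) i).continuous.mul
        (hucont.pow 2))).mul hwcont)).neg).aestronglyMeasurable)
      (hu2.const_mul (8*M))
    · intro n
      apply Filter.Eventually.of_forall
      intro x
      rw [Real.norm_eq_abs, abs_neg]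
      exact (hG1_bd n x).2
    · apply Filter.Eventually.of_forall
      intro x
      apply tendsto_const_nhds.congr'
      filter_upwards [hχ_fd_zero x] with n hn
      rw [hn]
      simp
  have lim_ineq : θ * c i * (∫ x, ρ x) ≤ 0 + ε * (∫ x, ρ x) + (1/ε) * B := by
    apply le_of_tendsto_of_tendsto' (hIn_tendsto.const_mul (θ * c i))
      ((hT_tendsto.add (hIn_tendsto.const_mul ε)).add tendsto_const_nhds)
    exact key
  have hA : ∫ x, ρ x ≤ (2/(θ * c i))^2 * B := by
    have h1ε : (1:ℝ)/ε = 2/(θ * c i) := by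
      rw [hε_def, one_div_div]
    have hexp : θ * c i * (∫ x, ρ x) = ε * (∫ x, ρ x) + ε * (∫ x, ρ x) := by
      rw [show θ*c i = ε + ε from by rw [hε_def]; ring]; ring
    have h : ε * (∫ x, ρ x) ≤ (1/ε) * B := by linarith [lim_ineq, hexp]
    have hA2 : ∫ x, ρ x ≤ (1/ε)^2 * B := by
      calc ∫ x, ρ x = (1/ε) * (ε * ∫ x, ρ x) := by field_simp
        _ ≤ (1/ε) * ((1/ε) * B) := mul_le_mul_of_nonneg_left h (by positivity)
        _ = (1/ε)^2 * B := by ring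
    rw [h1ε] at hA2
    exact hA2
  exact ⟨hρ_int, hA⟩

/-- Weighted estimate: for θ ∈ (0,1) and u ∈ H¹(w_θ), the function x ↦ σ⁻¹Kx·u(x) is in
    L²(w_θ) and ‖σ⁻¹Kx u‖_{L²(w_θ)} ≤ (2/θ)‖σ∇u‖_{L²(w_θ)}. -/
theorem weighted_xu_estimate (d : ℕ) (θ : ℝ) (hθ : θ ∈ Set.Ioo (0 : ℝ) 1)
    (K σ : Fin d → ℝ) (hK : ∀ i, 0 < K i) (hσ : ∀ i, 0 < σ i)
    (w : EuclideanSpace ℝ (Fin d) → ℝ)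
    (hw : w = fun x => Real.exp (θ / 2 * ∑ i, K i / (σ i) ^ 2 * (x i) ^ 2))
    (u : EuclideanSpace ℝ (Fin d) → ℝ) (hu : ContDiff ℝ 1 u)
    (hu2 : Integrable (fun x => u x ^ 2 * w x))
    (hgrad : Integrable (fun x =>
      (∑ i, (σ i * fderiv ℝ u x (EuclideanSpace.single i (1 : ℝ))) ^ 2) * w x)) :
    Integrable (fun x : EuclideanSpace ℝ (Fin d) =>
        (∑ i, (K i * x i / σ i * u x) ^ 2) * w x) ∧
      Real.sqrt (∫ x : EuclideanSpace ℝ (Fin d),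
          (∑ i, (K i * x i / σ i * u x) ^ 2) * w x) ≤
        (2 / θ) * Real.sqrt (∫ x : EuclideanSpace ℝ (Fin d),
          (∑ i, (σ i * fderiv ℝ u x (EuclideanSpace.single i (1 : ℝ))) ^ 2) * w x) := by
  obtain ⟨hθ0, hθ1⟩ := hθ
  have hc : ∀ j, 0 < K j / (σ j)^2 := fun j => div_pos (hK j) (pow_pos (hσ j) 2)
  have hwpos : ∀ x, 0 < w x := fun x => by rw [hw]; exact Real.exp_pos _
  have hwcont : Continuous w := by
    rw [hw]
    exact (continuous_const.mul (continuous_finset_sum _ fun j _ =>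
      continuous_const.mul ((EuclideanSpace.proj (𝕜 := ℝ) j).continuous.pow 2))).rexp
  have hdu_cont : ∀ v : EuclideanSpace ℝ (Fin d), Continuous fun x => fderiv ℝ u x v :=
    fun v => (hu.continuous_fderiv one_ne_zero).clm_apply continuous_const
  have hBi : ∀ i : Fin d,
      Integrable (fun x => (fderiv ℝ u x (EuclideanSpace.single i (1:ℝ)))^2 * w x) := by
    intro i
    apply (hgrad.const_mul ((1:ℝ)/(σ i)^2)).mono'
      (f := fun x => (fderiv ℝ u x (EuclideanSpace.single i (1:ℝ)))^2 * w x)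
      (((hdu_cont _).pow 2).mul hwcont).aestronglyMeasurable
    apply Filter.Eventually.of_forall
    intro x
    rw [Real.norm_eq_abs, abs_of_nonneg (mul_nonneg (sq_nonneg _) (hwpos x).le)]
    have h1 : (σ i * fderiv ℝ u x (EuclideanSpace.single i (1:ℝ)))^2
        ≤ ∑ j, (σ j * fderiv ℝ u x (EuclideanSpace.single j (1:ℝ)))^2 :=
      Finset.single_le_sum (f := fun j =>
        (σ j * fderiv ℝ u x (EuclideanSpace.single j (1:ℝ)))^2)
        (fun j _ => sq_nonneg _) (Finset.mem_univ i)
    have hσ0 : (σ i : ℝ) ≠ 0 := (hσ i).ne'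
    have h2 : (fderiv ℝ u x (EuclideanSpace.single i (1:ℝ)))^2
        = (1/(σ i)^2) * (σ i * fderiv ℝ u x (EuclideanSpace.single i (1:ℝ)))^2 := by
      field_simp
    rw [h2]
    have hw0 := (hwpos x).le
    calc (1/(σ i)^2) * (σ i * fderiv ℝ u x (EuclideanSpace.single i (1:ℝ)))^2 * w x
        ≤ (1/(σ i)^2) * (∑ j, (σ j * fderiv ℝ u x (EuclideanSpace.single j (1:ℝ)))^2) * w x := by
          apply mul_le_mul_of_nonneg_right _ hw0
          exact mul_le_mul_of_nonneg_left h1 (by positivity)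
      _ = 1/(σ i)^2 * ((∑ j, (σ j * fderiv ℝ u x (EuclideanSpace.single j (1:ℝ)))^2) * w x) := by
          ring
  have hgi : ∀ i : Fin d,
      Integrable (fun x => (σ i * fderiv ℝ u x (EuclideanSpace.single i (1:ℝ)))^2 * w x) := by
    intro i
    have h := (hBi i).const_mul ((σ i)^2)
    have heq : (fun x => (σ i * fderiv ℝ u x (EuclideanSpace.single i (1:ℝ)))^2 * w x)
        = fun x => (σ i)^2 * ((fderiv ℝ u x (EuclideanSpace.single i (1:ℝ)))^2 * w x) := by
      funext x; ring
    rw [heq]; exact h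
  have hco := fun i : Fin d => coord d θ hθ0 (fun j => K j / (σ j)^2) hc w u hw hu hu2 i (hBi i)
  have hsummand : ∀ i : Fin d, Integrable (fun x => (K i * x i / σ i * u x)^2 * w x) := by
    intro i
    have h := ((hco i).1.const_mul ((K i / σ i)^2))
    have heq : (fun x : EuclideanSpace ℝ (Fin d) => (K i * x i / σ i * u x)^2 * w x)
        = fun x => (K i / σ i)^2 * ((x i)^2 * u x^2 * w x) := by
      funext x; ring
    rw [heq]; exact h
  have hint : Integrable (fun x : EuclideanSpace ℝ (Fin d) =>
      (∑ i, (K i * x i / σ i * u x) ^ 2) * w x) := by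
    have heq : (fun x : EuclideanSpace ℝ (Fin d) => (∑ i, (K i * x i / σ i * u x)^2) * w x)
        = fun x => ∑ i, ((K i * x i / σ i * u x)^2 * w x) := by
      funext x; rw [Finset.sum_mul]
    rw [heq]
    exact integrable_finset_sum _ (fun i _ => hsummand i)
  refine ⟨hint, ?_⟩
  have hLHS : ∫ x : EuclideanSpace ℝ (Fin d), (∑ i, (K i * x i / σ i * u x)^2) * w x
      = ∑ i, (K i / σ i)^2 * ∫ x : EuclideanSpace ℝ (Fin d), (x i)^2 * u x^2 * w x := by
    calc ∫ x : EuclideanSpace ℝ (Fin d), (∑ i, (K i * x i / σ i * u x)^2) * w x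
        = ∫ x : EuclideanSpace ℝ (Fin d), ∑ i, ((K i * x i / σ i * u x)^2 * w x) := by
          congr 1; funext x; rw [Finset.sum_mul]
      _ = ∑ i, ∫ x : EuclideanSpace ℝ (Fin d), (K i * x i / σ i * u x)^2 * w x :=
          integral_finset_sum _ (fun i _ => hsummand i)
      _ = ∑ i, (K i / σ i)^2 * ∫ x : EuclideanSpace ℝ (Fin d), (x i)^2 * u x^2 * w x := by
          apply Finset.sum_congr rfl
          intro i _
          rw [← integral_const_mul]
          congr 1; funext x; ring
  have hRHS : ∫ x : EuclideanSpace ℝ (Fin d),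
        (∑ i, (σ i * fderiv ℝ u x (EuclideanSpace.single i (1:ℝ)))^2) * w x
      = ∑ i, (σ i)^2 * ∫ x : EuclideanSpace ℝ (Fin d),
          (fderiv ℝ u x (EuclideanSpace.single i (1:ℝ)))^2 * w x := by
    calc ∫ x : EuclideanSpace ℝ (Fin d),
          (∑ i, (σ i * fderiv ℝ u x (EuclideanSpace.single i (1:ℝ)))^2) * w x
        = ∫ x : EuclideanSpace ℝ (Fin d),
            ∑ i, ((σ i * fderiv ℝ u x (EuclideanSpace.single i (1:ℝ)))^2 * w x) := by
          congr 1; funext x; rw [Finset.sum_mul]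
      _ = ∑ i, ∫ x : EuclideanSpace ℝ (Fin d),
            (σ i * fderiv ℝ u x (EuclideanSpace.single i (1:ℝ)))^2 * w x :=
          integral_finset_sum _ (fun i _ => hgi i)
      _ = ∑ i, (σ i)^2 * ∫ x : EuclideanSpace ℝ (Fin d),
            (fderiv ℝ u x (EuclideanSpace.single i (1:ℝ)))^2 * w x := by
          apply Finset.sum_congr rfl
          intro i _
          rw [← integral_const_mul]
          congr 1; funext x; ring
  have hsum_le : ∑ i, (K i / σ i)^2 * ∫ x : EuclideanSpace ℝ (Fin d), (x i)^2 * u x^2 * w x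
      ≤ (2/θ)^2 * ∑ i, (σ i)^2 * ∫ x : EuclideanSpace ℝ (Fin d),
          (fderiv ℝ u x (EuclideanSpace.single i (1:ℝ)))^2 * w x := by
    rw [Finset.mul_sum]
    apply Finset.sum_le_sum
    intro i _
    have h := (hco i).2
    have hid : (K i / σ i)^2 * (2/(θ * (K i / (σ i)^2)))^2 = (2/θ)^2 * (σ i)^2 := by
      have hσ0 : (σ i : ℝ) ≠ 0 := (hσ i).ne'
      have hK0 : (K i : ℝ) ≠ 0 := (hK i).ne'
      have hθ0' : θ ≠ 0 := hθ0.ne'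
      field_simp
    calc (K i / σ i)^2 * ∫ x : EuclideanSpace ℝ (Fin d), (x i)^2 * u x^2 * w x
        ≤ (K i / σ i)^2 * ((2/(θ * (K i / (σ i)^2)))^2 * ∫ x : EuclideanSpace ℝ (Fin d),
            (fderiv ℝ u x (EuclideanSpace.single i (1:ℝ)))^2 * w x) :=
          mul_le_mul_of_nonneg_left h (sq_nonneg _)
      _ = ((K i / σ i)^2 * (2/(θ * (K i / (σ i)^2)))^2) * ∫ x : EuclideanSpace ℝ (Fin d),
            (fderiv ℝ u x (EuclideanSpace.single i (1:ℝ)))^2 * w x := by ring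
      _ = (2/θ)^2 * ((σ i)^2 * ∫ x : EuclideanSpace ℝ (Fin d),
            (fderiv ℝ u x (EuclideanSpace.single i (1:ℝ)))^2 * w x) := by rw [hid]; ring
  have h1 : ∫ x : EuclideanSpace ℝ (Fin d), (∑ i, (K i * x i / σ i * u x)^2) * w x
      ≤ (2/θ)^2 * ∫ x : EuclideanSpace ℝ (Fin d),
          (∑ i, (σ i * fderiv ℝ u x (EuclideanSpace.single i (1:ℝ)))^2) * w x := by
    rw [hLHS, hRHS]; exact hsum_le
  have h2 := Real.sqrt_le_sqrt h1
  rwa [Real.sqrt_mul (sq_nonneg _), Real.sqrt_sq (by positivity : (0:ℝ) ≤ 2/θ)] at h2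
end
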